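/- Let h : T → ℝ be a quasisymmetric homeomorphism with constant K ≥ 1. Let I ⊆ J be intervals in T sharing a single boundary point with |I|/|J| = α > 1/2, and suppose the closed interval Ĩ of length |I| sharing one endpoint with I and containing J∖I satisfies Ĩ ⊂ T. Then 1/(K·(1/(1+K⁻¹))^{[log₂(α/(1−α))]} + 1) ≤ |h(I)|/|h(J)| ≤ 1/(K⁻¹·(1/(1+K))^{log₂(α/(1−α))+1} + 1). -/

import Mathlib

set_option maxHeartbeats 1600000


/-- If `I = Icc c b ⊆ J = Icc c e` share the single boundary point `c`,
`|I|/|J| = α > 1/2` (and `α < 1`, since the boundary point is single), and the interval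
`Ĩ = Icc b (2b − c)` of length `|I|`, sharing the endpoint `b` with `I` and containing
`J ∖ I`, lies in `T`, then
`1/(K(1/(1+K⁻¹))^([log₂(α/(1−α))]) + 1) ≤ |h(I)|/|h(J)|
   ≤ 1/(K⁻¹(1/(1+K))^(log₂(α/(1−α))+1) + 1)`. -/
theorem stmt_3 (t₀ t₁ c b e : ℝ) (h : ℝ → ℝ) (K : ℝ) (hK : 1 ≤ K)
    (hmono : StrictMonoOn h (Set.Icc t₀ t₁))
    (hqs : ∀ x δ : ℝ, 0 < δ → x - δ ∈ Set.Icc t₀ t₁ → x + δ ∈ Set.Icc t₀ t₁ →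
      K⁻¹ ≤ (h (x + δ) - h x) / (h x - h (x - δ)) ∧
        (h (x + δ) - h x) / (h x - h (x - δ)) ≤ K)
    (hcb : c < b) (hbe : b < e) (hJT : Set.Icc c e ⊆ Set.Icc t₀ t₁)
    (α : ℝ) (hα : α = (b - c) / (e - c)) (hαgt : 1 / 2 < α) (hα1 : α < 1)
    (htilde : Set.Icc b (2 * b - c) ⊆ Set.Icc t₀ t₁) :
    1 / (K * (1 / (1 + K⁻¹)) ^ ⌊Real.logb 2 (α / (1 - α))⌋ + 1) ≤ (h b - h c) / (h e - h c) ∧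
      (h b - h c) / (h e - h c) ≤
        1 / (K⁻¹ * (1 / (1 + K)) ^ (Real.logb 2 (α / (1 - α)) + 1) + 1) := by
  have hK0 : (0:ℝ) < K := lt_of_lt_of_le one_pos hK
  have hec : (0:ℝ) < e - c := by linarith
  have hbc : (0:ℝ) < b - c := by linarith
  have heb : (0:ℝ) < e - b := by linarith
  have he2b : e < 2 * b - c := by
    rw [hα, div_lt_div_iff₀ (by norm_num) hec] at hαgt
    linarith
  -- the big interval is inside T
  have hsub : Set.Icc c (2 * b - c) ⊆ Set.Icc t₀ t₁ := by
    intro p hp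
    rcases le_or_gt p e with hpe | hpe
    · exact hJT ⟨hp.1, hpe⟩
    · exact htilde ⟨le_of_lt (lt_trans hbe hpe), hp.2⟩
  -- monotonicity on the big interval
  have hlt : ∀ x y : ℝ, x ∈ Set.Icc c (2 * b - c) → y ∈ Set.Icc c (2 * b - c) →
      x < y → h x < h y := fun x y hx hy hxy => hmono (hsub hx) (hsub hy) hxy
  -- quasisymmetry consequences
  have hqs1 : ∀ x δ : ℝ, 0 < δ → x - δ ∈ Set.Icc c (2 * b - c) →
      x + δ ∈ Set.Icc c (2 * b - c) →
      (h x - h (x - δ) ≤ K * (h (x + δ) - h x)) ∧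
        (h (x + δ) - h x ≤ K * (h x - h (x - δ))) := by
    intro x δ hδ hx1 hx2
    have hxm : x ∈ Set.Icc c (2 * b - c) := ⟨by linarith [hx1.1], by linarith [hx2.2]⟩
    have hd1 : 0 < h x - h (x - δ) := sub_pos.mpr (hlt _ _ hx1 hxm (by linarith))
    have hd2 : 0 < h (x + δ) - h x := sub_pos.mpr (hlt _ _ hxm hx2 (by linarith))
    obtain ⟨hlo, hhi⟩ := hqs x δ hδ (hsub hx1) (hsub hx2)
    constructor
    · have h1 : K⁻¹ * (h x - h (x - δ)) ≤ h (x + δ) - h x := (le_div_iff₀ hd1).mp hlo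
      have h2 := mul_le_mul_of_nonneg_left h1 hK0.le
      rwa [← mul_assoc, mul_inv_cancel₀ hK0.ne', one_mul] at h2
    · exact (div_le_iff₀ hd1).mp hhi
  set d : ℝ := e - b with hd
  set L : ℝ := Real.logb 2 ((b - c) / d) with hL
  have hrpos : (1:ℝ) < (b - c) / d := by
    rw [lt_div_iff₀ heb]; linarith
  have hL0 : 0 < L := Real.logb_pos one_lt_two hrpos
  have hL2 : (2:ℝ) ^ L = (b - c) / d :=
    Real.rpow_logb two_pos (by norm_num) (by positivity)
  have hstep : ∀ k : ℝ, k ≤ L → (2:ℝ) ^ k * d ≤ b - c := by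
    intro k hk
    have h1 : (2:ℝ) ^ k ≤ (2:ℝ) ^ L := Real.rpow_le_rpow_of_exponent_le one_le_two hk
    rw [hL2] at h1
    calc (2:ℝ) ^ k * d ≤ ((b - c) / d) * d := by
          exact mul_le_mul_of_nonneg_right h1 heb.le
      _ = b - c := div_mul_cancel₀ _ heb.ne'
  set n : ℕ := ⌊L⌋.toNat with hn
  have hfl : ⌊L⌋ = (n : ℤ) := (Int.toNat_of_nonneg (Int.floor_nonneg.mpr hL0.le)).symm
  have hnL : (n : ℝ) ≤ L := by
    have := Int.floor_le L
    rwa [hfl, Int.cast_natCast] at this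
  have hLn : L < (n : ℝ) + 1 := by
    have := Int.lt_floor_add_one L
    rwa [hfl, Int.cast_natCast] at this
  have hKi : (0:ℝ) < 1 + K⁻¹ := by positivity
  have hnpow : ∀ k : ℕ, ((2:ℝ) ^ (k:ℝ)) = (2:ℝ) ^ k := fun k => Real.rpow_natCast 2 k
  -- Claim A : growth to the right
  have claimA : ∀ k : ℕ, k ≤ n →
      (1 + K⁻¹) ^ k * (h e - h b) ≤ h (b + 2 ^ k * d) - h b := by
    intro k hkn
    induction k with
    | zero =>
      have : b + 2 ^ (0:ℕ) * d = e := by rw [hd]; ring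
      rw [this, pow_zero, one_mul]
    | succ k ih =>
      have hkn' : k ≤ n := Nat.le_of_succ_le hkn
      have ihk := ih hkn'
      have hkL : ((k:ℝ) + 1) ≤ L := by
        have h1 : ((k:ℝ) + 1) ≤ (n : ℝ) := by exact_mod_cast hkn
        linarith
      have hle : (2:ℝ) ^ (k+1) * d ≤ b - c := by
        have := hstep ((k:ℝ)+1) hkL
        rwa [show ((k:ℝ)+1) = ((k+1 : ℕ) : ℝ) by push_cast; ring, hnpow] at this
      have hdk : (0:ℝ) < 2 ^ k * d := by positivity
      have hmem1 : (b + 2 ^ k * d) - 2 ^ k * d ∈ Set.Icc c (2 * b - c) := by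
        constructor <;> [linarith; linarith]
      have hmem2 : (b + 2 ^ k * d) + 2 ^ k * d ∈ Set.Icc c (2 * b - c) := by
        have h2 : (2:ℝ) ^ k * d + 2 ^ k * d = 2 ^ (k+1) * d := by ring
        constructor
        · linarith [hdk]
        · linarith [hle, h2]
      obtain ⟨hA, _⟩ := hqs1 (b + 2 ^ k * d) (2 ^ k * d) hdk hmem1 hmem2
      have heq1 : (b + 2 ^ k * d) - 2 ^ k * d = b := by ring
      have heq2 : (b + 2 ^ k * d) + 2 ^ k * d = b + 2 ^ (k+1) * d := by ring
      rw [heq1, heq2] at hA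
      -- hA : h (b + 2^k d) - h b ≤ K * (h (b + 2^(k+1) d) - h (b + 2^k d))
      set A := h (b + 2 ^ k * d) - h b with hAdef
      set B := h (b + 2 ^ (k+1) * d) - h (b + 2 ^ k * d) with hBdef
      have hKB : K⁻¹ * A ≤ B := by
        have := mul_le_mul_of_nonneg_left hA (inv_nonneg.mpr hK0.le)
        rwa [← mul_assoc, inv_mul_cancel₀ hK0.ne', one_mul] at this
      have hQ0 : (0:ℝ) ≤ (1 + K⁻¹) ^ k * (h e - h b) := by
        have heQ : 0 < h e - h b := sub_pos.mpr (hlt b e ⟨hcb.le, by linarith⟩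
          ⟨by linarith, by linarith⟩ hbe)
        positivity
      have key : (1 + K⁻¹) * ((1 + K⁻¹) ^ k * (h e - h b)) ≤ A + B := by
        have h1 : (1 + K⁻¹) * ((1 + K⁻¹) ^ k * (h e - h b)) ≤ (1 + K⁻¹) * A :=
          mul_le_mul_of_nonneg_left ihk hKi.le
        have h2 : (1 + K⁻¹) * A = A + K⁻¹ * A := by ring
        linarith
      calc (1 + K⁻¹) ^ (k+1) * (h e - h b)
          = (1 + K⁻¹) * ((1 + K⁻¹) ^ k * (h e - h b)) := by ring
        _ ≤ A + B := key
        _ = h (b + 2 ^ (k+1) * d) - h b := by rw [hAdef, hBdef]; ring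
  -- Claim B : growth to the left
  have claimB : ∀ k : ℕ, k ≤ n →
      h b - h (b - 2 ^ k * d) ≤ K * (1 + K) ^ k * (h e - h b) := by
    intro k hkn
    induction k with
    | zero =>
      have hp0 : (2:ℝ) ^ (0:ℕ) * d = e - b := by rw [hd]; ring
      have hmem1 : b - 2 ^ (0:ℕ) * d ∈ Set.Icc c (2 * b - c) := by
        constructor <;> [linarith [hp0]; linarith [hp0]]
      have hmem2 : b + 2 ^ (0:ℕ) * d ∈ Set.Icc c (2 * b - c) := by
        constructor <;> [linarith [hp0]; linarith [hp0]]
      have hd0 : (0:ℝ) < 2 ^ (0:ℕ) * d := by positivity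
      obtain ⟨hA, _⟩ := hqs1 b (2 ^ (0:ℕ) * d) hd0 hmem1 hmem2
      have : b + 2 ^ (0:ℕ) * d = e := by rw [hd]; ring
      rw [this] at hA
      calc h b - h (b - 2 ^ (0:ℕ) * d) ≤ K * (h e - h b) := hA
        _ = K * (1 + K) ^ (0:ℕ) * (h e - h b) := by ring
    | succ k ih =>
      have hkn' : k ≤ n := Nat.le_of_succ_le hkn
      have ihk := ih hkn'
      have hkL : ((k:ℝ) + 1) ≤ L := by
        have h1 : ((k:ℝ) + 1) ≤ (n : ℝ) := by exact_mod_cast hkn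
        linarith
      have hle : (2:ℝ) ^ (k+1) * d ≤ b - c := by
        have := hstep ((k:ℝ)+1) hkL
        rwa [show ((k:ℝ)+1) = ((k+1 : ℕ) : ℝ) by push_cast; ring, hnpow] at this
      have hdk : (0:ℝ) < 2 ^ k * d := by positivity
      have hmem1 : (b - 2 ^ k * d) - 2 ^ k * d ∈ Set.Icc c (2 * b - c) := by
        have h2 : (2:ℝ) ^ k * d + 2 ^ k * d = 2 ^ (k+1) * d := by ring
        constructor
        · linarith [hle, h2]
        · linarith [hdk]
      have hmem2 : (b - 2 ^ k * d) + 2 ^ k * d ∈ Set.Icc c (2 * b - c) := by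
        constructor
        · linarith [hdk]
        · linarith [hdk]
      obtain ⟨hA, _⟩ := hqs1 (b - 2 ^ k * d) (2 ^ k * d) hdk hmem1 hmem2
      have heq1 : (b - 2 ^ k * d) - 2 ^ k * d = b - 2 ^ (k+1) * d := by ring
      have heq2 : (b - 2 ^ k * d) + 2 ^ k * d = b := by ring
      rw [heq1, heq2] at hA
      -- hA : h (b - 2^k d) - h (b - 2^(k+1) d) ≤ K * (h b - h (b - 2^k d))
      have heQ : 0 < h e - h b := sub_pos.mpr (hlt b e ⟨hcb.le, by linarith⟩
        ⟨by linarith, by linarith⟩ hbe)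
      have hKp : (0:ℝ) ≤ K * (1 + K) ^ k := by positivity
      calc h b - h (b - 2 ^ (k+1) * d)
          = (h b - h (b - 2 ^ k * d)) + (h (b - 2 ^ k * d) - h (b - 2 ^ (k+1) * d)) := by ring
        _ ≤ (h b - h (b - 2 ^ k * d)) + K * (h b - h (b - 2 ^ k * d)) := by linarith
        _ = (1 + K) * (h b - h (b - 2 ^ k * d)) := by ring
        _ ≤ (1 + K) * (K * (1 + K) ^ k * (h e - h b)) := by
            apply mul_le_mul_of_nonneg_left ihk (by positivity)
        _ = K * (1 + K) ^ (k+1) * (h e - h b) := by ring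
  -- abbreviations
  have hP : 0 < h b - h c := sub_pos.mpr (hlt c b ⟨le_refl c, by linarith⟩
    ⟨hcb.le, by linarith⟩ hcb)
  have hQ : 0 < h e - h b := sub_pos.mpr (hlt b e ⟨hcb.le, by linarith⟩
    ⟨by linarith, by linarith⟩ hbe)
  set P := h b - h c with hPdef
  set Q := h e - h b with hQdef
  have hEC : h e - h c = Q + P := by rw [hPdef, hQdef]; ring
  -- lower bound on P in terms of Q : K⁻¹ (1+K⁻¹)^n Q ≤ P
  have hnd : (2:ℝ) ^ n * d ≤ b - c := by
    have := hstep (n:ℝ) hnL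
    rwa [hnpow] at this
  have lbP : K⁻¹ * (1 + K⁻¹) ^ n * Q ≤ P := by
    have hA := claimA n le_rfl
    have hdn : (0:ℝ) < 2 ^ n * d := by positivity
    have hmemx : b + 2 ^ n * d ∈ Set.Icc c (2 * b - c) := by
      constructor
      · linarith [hdn]
      · linarith [hnd]
    have hmemR : (2:ℝ) * b - c ∈ Set.Icc c (2 * b - c) := ⟨by linarith, le_refl _⟩
    have hx2b : h (b + 2 ^ n * d) ≤ h (2 * b - c) := by
      rcases eq_or_lt_of_le (show b + 2 ^ n * d ≤ 2 * b - c by linarith [hnd]) with heq | hlt'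
      · rw [heq]
      · exact le_of_lt (hlt _ _ hmemx hmemR hlt')
    -- QS at b with δ = b - c
    have hmem1 : b - (b - c) ∈ Set.Icc c (2 * b - c) := by
      constructor <;> [linarith; linarith]
    have hmem2 : b + (b - c) ∈ Set.Icc c (2 * b - c) := by
      constructor <;> [linarith; linarith]
    obtain ⟨_, hB⟩ := hqs1 b (b - c) hbc hmem1 hmem2
    have heq1 : b - (b - c) = c := by ring
    have heq2 : b + (b - c) = 2 * b - c := by ring
    rw [heq1, heq2] at hB
    -- hB : h (2b - c) - h b ≤ K * (h b - h c)
    have hchain : (1 + K⁻¹) ^ n * Q ≤ K * P := by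
      calc (1 + K⁻¹) ^ n * Q ≤ h (b + 2 ^ n * d) - h b := hA
        _ ≤ h (2 * b - c) - h b := by linarith
        _ ≤ K * P := hB
    have := mul_le_mul_of_nonneg_left hchain (inv_nonneg.mpr hK0.le)
    rw [← mul_assoc, ← mul_assoc, inv_mul_cancel₀ hK0.ne', one_mul] at this
    linarith [this]
  -- upper bound on P : P ≤ K (1+K)^(n+1) Q
  have ubP : P ≤ K * (1 + K) ^ (n+1) * Q := by
    set x := b - 2 ^ n * d with hx
    have hdn : (0:ℝ) < 2 ^ n * d := by positivity
    have hxc : c ≤ x := by rw [hx]; linarith [hnd]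
    have hxb : x < b := by rw [hx]; linarith [hdn]
    have hB := claimB n le_rfl
    have hbc2 : b - c ≤ 2 ^ (n+1) * d := by
      have h1 : (2:ℝ) ^ L ≤ (2:ℝ) ^ ((n:ℝ)+1) :=
        Real.rpow_le_rpow_of_exponent_le one_le_two hLn.le
      rw [hL2, show ((n:ℝ)+1) = ((n+1 : ℕ) : ℝ) by push_cast; ring, hnpow] at h1
      calc b - c = ((b - c) / d) * d := (div_mul_cancel₀ _ heb.ne').symm
        _ ≤ (2:ℝ) ^ (n+1) * d := mul_le_mul_of_nonneg_right h1 heb.le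
    have hxc2 : h x - h c ≤ K * (h b - h x) := by
      rcases eq_or_lt_of_le hxc with heq | hlt'
      · rw [← heq]
        have : h c - h c = 0 := by ring
        rw [this]
        have : 0 < h b - h x := sub_pos.mpr (hlt x b ⟨hxc, by linarith⟩
          ⟨hcb.le, by linarith⟩ hxb)
        positivity
      · have hδ : 0 < x - c := sub_pos.mpr hlt'
        have hmem1 : x - (x - c) ∈ Set.Icc c (2 * b - c) := by
          constructor <;> [linarith; linarith]
        have hmem2 : x + (x - c) ∈ Set.Icc c (2 * b - c) := by
          constructor <;> [linarith; linarith]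
        obtain ⟨hA, _⟩ := hqs1 x (x - c) hδ hmem1 hmem2
        have heq1 : x - (x - c) = c := by ring
        rw [heq1] at hA
        -- hA : h x - h c ≤ K * (h (x + (x - c)) - h x)
        have hxxb : x + (x - c) ≤ b := by
          have h2n : (2:ℝ) ^ (n+1) * d = 2 * (2 ^ n * d) := by ring
          rw [hx]; linarith [hbc2, h2n]
        have hmono2 : h (x + (x - c)) ≤ h b := by
          rcases eq_or_lt_of_le hxxb with heq | hlt'
          · rw [heq]
          · exact le_of_lt (hlt _ _ ⟨by linarith, by linarith⟩
              ⟨hcb.le, by linarith⟩ hlt')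
        calc h x - h c ≤ K * (h (x + (x - c)) - h x) := hA
          _ ≤ K * (h b - h x) := by
              apply mul_le_mul_of_nonneg_left _ hK0.le
              linarith
    calc P = (h b - h x) + (h x - h c) := by rw [hPdef]; ring
      _ ≤ (h b - h x) + K * (h b - h x) := by linarith
      _ = (1 + K) * (h b - h x) := by ring
      _ ≤ (1 + K) * (K * (1 + K) ^ n * Q) := mul_le_mul_of_nonneg_left (hB) (by positivity)
      _ = K * (1 + K) ^ (n+1) * Q := by ring
  -- rewrite the logb argument
  have h1α : 1 - α = (e - b) / (e - c) := by
    rw [hα]; field_simp; ring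
  have harg : α / (1 - α) = (b - c) / d := by
    have h1 : e - c ≠ 0 := hec.ne'
    have h2 : e - b ≠ 0 := by rw [hd] at heb; exact heb.ne'
    rw [h1α, hα, hd]
    field_simp
  rw [harg, hEC]
  rw [← hL]
  constructor
  · -- lower bound
    rw [hfl]
    have hv : ((1:ℝ) / (1 + K⁻¹)) ^ (n:ℤ) = ((1 + K⁻¹) ^ n)⁻¹ := by
      rw [zpow_natCast, one_div, inv_pow]
    rw [hv]
    have hvpos : (0:ℝ) < ((1 + K⁻¹) ^ n)⁻¹ := by positivity
    have hden : (0:ℝ) < K * ((1 + K⁻¹) ^ n)⁻¹ + 1 := by positivity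
    rw [div_le_div_iff₀ hden (by linarith : (0:ℝ) < Q + P)]
    -- 1 * (Q + P) ≤ P * (K * v + 1), i.e. Q ≤ P * K * v
    have hQle : Q ≤ K * ((1 + K⁻¹) ^ n)⁻¹ * P := by
      have h1 := mul_le_mul_of_nonneg_left lbP (le_of_lt (show (0:ℝ) < K * ((1 + K⁻¹) ^ n)⁻¹ by positivity))
      have h2 : K * ((1 + K⁻¹) ^ n)⁻¹ * (K⁻¹ * (1 + K⁻¹) ^ n * Q) = Q := by
        field_simp
      rw [h2] at h1
      exact h1
    ring_nf at hQle ⊢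
    linarith [hQle]
  · -- upper bound
    have hpow : (0:ℝ) < ((1:ℝ) / (1 + K)) ^ (L + 1) := by
      apply Real.rpow_pos_of_pos; positivity
    have hden : (0:ℝ) < K⁻¹ * ((1:ℝ) / (1 + K)) ^ (L + 1) + 1 := by positivity
    rw [div_le_div_iff₀ (by linarith : (0:ℝ) < Q + P) hden]
    -- P * (w + 1) ≤ 1 * (Q + P), i.e. w * P ≤ Q
    have hKL : (0:ℝ) < (1 + K : ℝ) ^ (L + 1) := Real.rpow_pos_of_pos (by positivity) _
    have hwrw : ((1:ℝ) / (1 + K)) ^ (L + 1) = ((1 + K : ℝ) ^ (L + 1))⁻¹ := by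
      rw [one_div, ← Real.inv_rpow (by positivity : (0:ℝ) ≤ 1 + K)]
    have hP2 : P ≤ K * (1 + K) ^ (L + 1) * Q := by
      have h1 : ((1 + K:ℝ)) ^ ((n:ℝ)+1) ≤ (1 + K) ^ (L + 1) := by
        apply Real.rpow_le_rpow_of_exponent_le (by linarith)
        linarith
      have h2 : ((1 + K:ℝ)) ^ ((n:ℝ)+1) = (1 + K) ^ (n+1 : ℕ) := by
        rw [show ((n:ℝ)+1) = ((n+1 : ℕ) : ℝ) by push_cast; ring, Real.rpow_natCast]
      calc P ≤ K * (1 + K) ^ (n+1) * Q := ubP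
        _ ≤ K * (1 + K) ^ (L + 1) * Q := by
            apply mul_le_mul_of_nonneg_right _ hQ.le
            apply mul_le_mul_of_nonneg_left _ hK0.le
            rw [← h2]; exact h1
    have hwP : K⁻¹ * ((1:ℝ) / (1 + K)) ^ (L + 1) * P ≤ Q := by
      rw [hwrw]
      have h1 := mul_le_mul_of_nonneg_left hP2
        (le_of_lt (show (0:ℝ) < K⁻¹ * ((1 + K:ℝ) ^ (L + 1))⁻¹ by positivity))
      have h2 : K⁻¹ * ((1 + K:ℝ) ^ (L + 1))⁻¹ * (K * (1 + K) ^ (L + 1) * Q) = Q := by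
        field_simp
      rw [h2] at h1
      linarith [h1]
    ring_nf at hwP ⊢
    linarith [hwP]
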